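/- For every A > 0 there exist B > 0 and C > 0 such that for all real x ≥ 2, the number of positive integers n ≤ x for which #Ψ*(n) + τ(n) > (log x)^B is at most C x / (log x)^A. -/

import Mathlib

open Finset

lemma aux_card_divisors_le (m : ℕ) (hm : 0 < m) : m.divisors.card ≤ 2 * m.sqrt := by
  classical
  set s := m.sqrt with hs
  have hsplit := Finset.card_filter_add_card_filter_not
    (s := m.divisors) (p := fun d => d ≤ s)
  have h1 : (m.divisors.filter (fun d => d ≤ s)).card ≤ s := by
    refine le_trans (Finset.card_le_card (t := Finset.Icc 1 s) ?_) (by simp)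
    intro d hd
    simp only [Finset.mem_filter] at hd
    exact Finset.mem_Icc.mpr ⟨Nat.pos_of_mem_divisors hd.1, hd.2⟩
  have h2 : (m.divisors.filter (fun d => ¬ d ≤ s)).card ≤ s := by
    refine le_trans (Finset.card_le_card_of_injOn (fun d => m / d) ?_ ?_) (by simp : (Finset.Icc 1 s).card ≤ s)
    · intro d hd
      simp only [Finset.mem_coe, Finset.mem_filter, Nat.mem_divisors, not_le] at hd
      obtain ⟨⟨hdvd, hm0⟩, hds⟩ := hd
      have hd0 : 0 < d := Nat.pos_of_dvd_of_pos hdvd hm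
      refine Finset.mem_Icc.mpr ⟨Nat.one_le_div_iff hd0 |>.mpr (Nat.le_of_dvd hm hdvd), ?_⟩
      by_contra h
      push_neg at h
      have hmd : m = d * (m / d) := (Nat.mul_div_cancel' hdvd).symm
      have hlt : (s+1) * (s+1) ≤ d * (m / d) := Nat.mul_le_mul hds h
      have hsucc : m < (s+1) * (s+1) := Nat.lt_succ_sqrt m
      omega
    · intro d1 h1' d2 h2' h
      simp only [Finset.coe_filter, Set.mem_setOf_eq, Nat.mem_divisors] at h1' h2'
      have e1 : m / (m / d1) = d1 := Nat.div_div_self h1'.1.1 hm.ne'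
      have e2 : m / (m / d2) = d2 := Nat.div_div_self h2'.1.1 hm.ne'
      have h' : m / d1 = m / d2 := h
      rw [← e1, ← e2, h']
  omega

lemma aux_le_totient_mul (m : ℕ) (hm : 0 < m) : m ≤ m.totient * m.divisors.card := by
  conv_lhs => rw [← Nat.sum_totient m]
  calc ∑ d ∈ m.divisors, Nat.totient d
      ≤ ∑ _d ∈ m.divisors, m.totient := by
        refine Finset.sum_le_sum fun d hd => ?_
        exact Nat.le_of_dvd (Nat.totient_pos.mpr hm)
          (Nat.totient_dvd_of_dvd (Nat.dvd_of_mem_divisors hd))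
    _ = m.divisors.card * m.totient := by rw [Finset.sum_const, smul_eq_mul]
    _ = m.totient * m.divisors.card := mul_comm _ _

lemma aux_le_nine_totient_sq (m : ℕ) : m ≤ 9 * m.totient ^ 2 := by
  rcases Nat.eq_zero_or_pos m with h | hm
  · simp [h]
  have h2 := aux_le_totient_mul m hm
  have h1 := aux_card_divisors_le m hm
  have hφ : 1 ≤ m.totient := Nat.totient_pos.mpr hm
  have hss : m.sqrt ^ 2 ≤ m := Nat.sqrt_le' m
  have hsucc : m < (m.sqrt + 1) * (m.sqrt + 1) := Nat.lt_succ_sqrt m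
  have hs1 : 1 ≤ m.sqrt := by nlinarith
  have hτ : m ≤ m.totient * (2 * m.sqrt) :=
    le_trans h2 (Nat.mul_le_mul_left _ h1)
  have hkey : m.sqrt * m.sqrt ≤ (2 * m.totient) * m.sqrt := by nlinarith
  have hs2φ : m.sqrt ≤ 2 * m.totient :=
    Nat.le_of_mul_le_mul_right hkey (by omega)
  nlinarith

open Finset

lemma aux_harmonic (K : ℕ) : ∑ d ∈ Finset.Icc 1 K, (d:ℝ)⁻¹ ≤ 1 + Real.log K := by
  have h := harmonic_le_one_add_log K
  rw [harmonic_eq_sum_Icc] at h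
  push_cast at h
  exact h

lemma aux_count_multiples (d N : ℕ) :
    ((Finset.Icc 1 N).filter (fun n => d ∣ n)).card = N / d := by
  rw [show Finset.Icc 1 N = Finset.Ioc 0 N from Finset.Icc_add_one_left_eq_Ioc (a := 0) (b := N)]
  exact Nat.Ioc_filter_dvd_card_eq_div N d

lemma aux_divisors_eq {N n : ℕ} (h1 : 1 ≤ n) (h2 : n ≤ N) :
    n.divisors = (Finset.Icc 1 N).filter (fun d => d ∣ n) := by
  ext d
  simp only [Nat.mem_divisors, Finset.mem_filter, Finset.mem_Icc]
  constructor
  · rintro ⟨hd, -⟩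
    exact ⟨⟨Nat.pos_of_dvd_of_pos hd h1, le_trans (Nat.le_of_dvd h1 hd) h2⟩, hd⟩
  · rintro ⟨-, hd⟩
    exact ⟨hd, by omega⟩

lemma aux_sum_tau_nat (N : ℕ) :
    ∑ n ∈ Finset.Icc 1 N, n.divisors.card = ∑ d ∈ Finset.Icc 1 N, N / d := by
  classical
  calc ∑ n ∈ Finset.Icc 1 N, n.divisors.card
      = ∑ n ∈ Finset.Icc 1 N, ((Finset.Icc 1 N).filter (fun d => d ∣ n)).card := by
        refine Finset.sum_congr rfl fun n hn => ?_
        rw [← aux_divisors_eq (Finset.mem_Icc.mp hn).1 (Finset.mem_Icc.mp hn).2]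
    _ = ∑ n ∈ Finset.Icc 1 N, ∑ d ∈ Finset.Icc 1 N, if d ∣ n then 1 else 0 := by
        simp only [Finset.card_filter]
    _ = ∑ d ∈ Finset.Icc 1 N, ∑ n ∈ Finset.Icc 1 N, if d ∣ n then 1 else 0 :=
        Finset.sum_comm
    _ = ∑ d ∈ Finset.Icc 1 N, ((Finset.Icc 1 N).filter (fun n => d ∣ n)).card := by
        simp only [Finset.card_filter]
    _ = ∑ d ∈ Finset.Icc 1 N, N / d := by
        exact Finset.sum_congr rfl fun d _ => aux_count_multiples d N

lemma aux_sum_count_nat (N M : ℕ) :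
    ∑ n ∈ Finset.Icc 1 N, ((Finset.Icc 1 M).filter (fun m => m.totient ∣ n)).card
      = ∑ m ∈ Finset.Icc 1 M, N / m.totient := by
  classical
  calc ∑ n ∈ Finset.Icc 1 N, ((Finset.Icc 1 M).filter (fun m => m.totient ∣ n)).card
      = ∑ n ∈ Finset.Icc 1 N, ∑ m ∈ Finset.Icc 1 M, if m.totient ∣ n then 1 else 0 := by
        simp only [Finset.card_filter]
    _ = ∑ m ∈ Finset.Icc 1 M, ∑ n ∈ Finset.Icc 1 N, if m.totient ∣ n then 1 else 0 :=
        Finset.sum_comm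
    _ = ∑ m ∈ Finset.Icc 1 M, ((Finset.Icc 1 N).filter (fun n => m.totient ∣ n)).card := by
        simp only [Finset.card_filter]
    _ = ∑ m ∈ Finset.Icc 1 M, N / m.totient := by
        exact Finset.sum_congr rfl fun m _ => aux_count_multiples _ N

lemma aux_sum_tau_div (M : ℕ) :
    ∑ m ∈ Finset.Icc 1 M, (m.divisors.card : ℝ) / m
      ≤ (∑ d ∈ Finset.Icc 1 M, (d:ℝ)⁻¹) ^ 2 := by
  classical
  set g : ℕ × ℕ → ℝ := fun q => (q.1:ℝ)⁻¹ * (q.2:ℝ)⁻¹ with hg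
  set S := (Finset.Icc 1 M).sigma (fun m => m.divisors) with hS
  set i : (Σ _m : ℕ, ℕ) → ℕ × ℕ := fun p => (p.2, p.1 / p.2) with hi
  have hinj : ∀ p ∈ S, ∀ r ∈ S, i p = i r → p = r := by
    intro p hp r hr h
    simp only [hS, Finset.mem_sigma, Nat.mem_divisors] at hp hr
    simp only [hi, Prod.mk.injEq] at h
    obtain ⟨h1, h2⟩ := h
    have hp' : p.1 = p.2 * (p.1 / p.2) := (Nat.mul_div_cancel' hp.2.1).symm
    have hr' : r.1 = r.2 * (r.1 / r.2) := (Nat.mul_div_cancel' hr.2.1).symm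
    have hfst : p.1 = r.1 := by rw [hp', hr', h2, h1]
    exact Sigma.ext hfst (heq_of_eq h1)
  have step1 : ∑ m ∈ Finset.Icc 1 M, (m.divisors.card : ℝ) / m
      = ∑ p ∈ S, g (i p) := by
    rw [hS, Finset.sum_sigma]
    refine Finset.sum_congr rfl fun m hm => ?_
    have key : ∀ d ∈ m.divisors, g (i ⟨m, d⟩) = (m:ℝ)⁻¹ := by
      intro d hd
      have hdvd : d ∣ m := Nat.dvd_of_mem_divisors hd
      simp only [hg, hi]
      rw [← mul_inv, ← Nat.cast_mul, Nat.mul_div_cancel' hdvd]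
    rw [Finset.sum_congr rfl key, Finset.sum_const, nsmul_eq_mul, div_eq_mul_inv]
  have step2 : ∑ p ∈ S, g (i p) = ∑ q ∈ S.image i, g q :=
    (Finset.sum_image hinj).symm
  have hsub : S.image i ⊆ (Finset.Icc 1 M) ×ˢ (Finset.Icc 1 M) := by
    intro q hq
    simp only [Finset.mem_image, hS, Finset.mem_sigma, Nat.mem_divisors,
      Finset.mem_Icc] at hq
    obtain ⟨p, ⟨hp1, hp2⟩, rfl⟩ := hq
    have h1 : 1 ≤ p.1 := hp1.1
    have hdvd := hp2.1
    have hd1 : 1 ≤ p.2 := Nat.pos_of_dvd_of_pos hdvd h1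
    have hq1 : 1 ≤ p.1 / p.2 := (Nat.one_le_div_iff hd1).mpr (Nat.le_of_dvd h1 hdvd)
    simp only [hi, Finset.mem_product, Finset.mem_Icc]
    exact ⟨⟨hd1, le_trans (Nat.le_of_dvd h1 hdvd) hp1.2⟩,
      ⟨hq1, le_trans (Nat.div_le_self _ _) hp1.2⟩⟩
  have step3 : ∑ q ∈ S.image i, g q ≤ ∑ q ∈ (Finset.Icc 1 M) ×ˢ (Finset.Icc 1 M), g q := by
    refine Finset.sum_le_sum_of_subset_of_nonneg hsub fun q _ _ => ?_
    simp only [hg]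
    positivity
  have step4 : ∑ q ∈ (Finset.Icc 1 M) ×ˢ (Finset.Icc 1 M), g q
      = (∑ d ∈ Finset.Icc 1 M, (d:ℝ)⁻¹) ^ 2 := by
    rw [sq, Finset.sum_mul_sum, ← Finset.sum_product']
  rw [step1, step2, ← step4] at *
  exact step3

set_option maxHeartbeats 2000000 in
theorem card_exceptional_set_le (A : ℝ) (hA : 0 < A) :
    ∃ B C : ℝ, 0 < B ∧ 0 < C ∧ ∀ x : ℝ, 2 ≤ x →
      ({n : ℕ | 0 < n ∧ (n : ℝ) ≤ x ∧
          (Real.log x) ^ B <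
            ({m : ℕ | 0 < m ∧ m.totient ∣ n}.ncard : ℝ) + (n.divisors.card : ℝ)}.ncard : ℝ)
        ≤ C * x / (Real.log x) ^ A := by
  classical
  refine ⟨A + 2, 70, by linarith, by norm_num, fun x hx => ?_⟩
  set L := Real.log x with hLdef
  have hx0 : (0:ℝ) < x := by linarith
  have hlog2 : (0.6931471803 : ℝ) < Real.log 2 := Real.log_two_gt_d9
  have hL2 : Real.log 2 ≤ L := Real.log_le_log (by norm_num) hx
  have hL0 : 0 < L := by linarith
  have hLhalf : (1:ℝ) ≤ 2 * L := by linarith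
  set N := Nat.floor x with hNdef
  have hN2 : 2 ≤ N := Nat.le_floor (by exact_mod_cast hx)
  have hN1 : 1 ≤ N := by omega
  have hNx : (N:ℝ) ≤ x := Nat.floor_le (le_of_lt hx0)
  have hN0 : (0:ℝ) < N := by exact_mod_cast Nat.lt_of_lt_of_le Nat.zero_lt_two hN2
  set M := 9 * N ^ 2 with hMdef
  have hM1 : 1 ≤ M := by have : 1 ≤ N ^ 2 := Nat.one_le_pow _ _ hN1; omega
  -- the exceptional set as a finset
  set P : ℕ → Prop := fun n =>
    L ^ (A + 2 : ℝ) <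
      (({m : ℕ | 0 < m ∧ m.totient ∣ n}.ncard : ℝ) + (n.divisors.card : ℝ)) with hP
  set E : Finset ℕ := (Finset.Icc 1 N).filter P with hE
  have hEeq : {n : ℕ | 0 < n ∧ (n : ℝ) ≤ x ∧
      (Real.log x) ^ (A + 2 : ℝ) <
        (({m : ℕ | 0 < m ∧ m.totient ∣ n}.ncard : ℝ) + (n.divisors.card : ℝ))} = ↑E := by
    ext n
    simp only [hE, Set.mem_setOf_eq, Finset.coe_filter, Finset.mem_Icc, hP]
    constructor
    · rintro ⟨h1, h2, h3⟩
      exact ⟨⟨h1, Nat.le_floor h2⟩, h3⟩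
    · rintro ⟨⟨h1, h2⟩, h3⟩
      exact ⟨h1, le_trans (by exact_mod_cast h2) hNx, h3⟩
  rw [hEeq, Set.ncard_coe_finset]
  -- identify the inner set with a finset for n in range
  have hset : ∀ n ∈ Finset.Icc 1 N, {m : ℕ | 0 < m ∧ m.totient ∣ n}
      = ↑((Finset.Icc 1 M).filter (fun m => m.totient ∣ n)) := by
    intro n hn
    obtain ⟨hn1, hnN⟩ := Finset.mem_Icc.mp hn
    ext m
    simp only [Set.mem_setOf_eq, Finset.coe_filter, Finset.mem_Icc]
    constructor
    · rintro ⟨hm0, hdvd⟩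
      refine ⟨⟨hm0, ?_⟩, hdvd⟩
      have h1 : m.totient ≤ n := Nat.le_of_dvd hn1 hdvd
      have h2 : m ≤ 9 * m.totient ^ 2 := aux_le_nine_totient_sq m
      calc m ≤ 9 * m.totient ^ 2 := h2
        _ ≤ 9 * n ^ 2 := by nlinarith
        _ ≤ 9 * N ^ 2 := by nlinarith
    · rintro ⟨⟨hm1, _⟩, hdvd⟩
      exact ⟨hm1, hdvd⟩
  -- Markov
  have hmarkov : (E.card : ℝ) * L ^ (A + 2 : ℝ)
      ≤ ∑ n ∈ Finset.Icc 1 N,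
          ((((Finset.Icc 1 M).filter (fun m => m.totient ∣ n)).card : ℝ)
            + (n.divisors.card : ℝ)) := by
    have h1 : (E.card : ℝ) * L ^ (A + 2 : ℝ)
        ≤ ∑ n ∈ E, (({m : ℕ | 0 < m ∧ m.totient ∣ n}.ncard : ℝ) + (n.divisors.card : ℝ)) := by
      have := Finset.card_nsmul_le_sum E
        (fun n => (({m : ℕ | 0 < m ∧ m.totient ∣ n}.ncard : ℝ) + (n.divisors.card : ℝ)))
        (L ^ (A + 2 : ℝ))
        (fun n hn => le_of_lt (Finset.mem_filter.mp hn).2)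
      simpa [nsmul_eq_mul] using this
    refine le_trans h1 ?_
    have h2 : ∑ n ∈ E, (({m : ℕ | 0 < m ∧ m.totient ∣ n}.ncard : ℝ) + (n.divisors.card : ℝ))
        = ∑ n ∈ E, ((((Finset.Icc 1 M).filter (fun m => m.totient ∣ n)).card : ℝ)
            + (n.divisors.card : ℝ)) := by
      refine Finset.sum_congr rfl fun n hn => ?_
      rw [hset n (Finset.mem_of_mem_filter n hn), Set.ncard_coe_finset]
    rw [h2]
    refine Finset.sum_le_sum_of_subset_of_nonneg (Finset.filter_subset _ _) fun n _ _ => by positivity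
  -- bound the tau sum
  have hlogN : Real.log N ≤ L := Real.log_le_log hN0 hNx
  have htau : ((∑ d ∈ Finset.Icc 1 N, N / d : ℕ) : ℝ) ≤ x * (3 * L) := by
    push_cast
    calc ∑ d ∈ Finset.Icc 1 N, ((N / d : ℕ) : ℝ)
        ≤ ∑ d ∈ Finset.Icc 1 N, (N : ℝ) * (d:ℝ)⁻¹ := by
          refine Finset.sum_le_sum fun d _ => ?_
          rw [mul_comm, ← div_eq_inv_mul]
          exact Nat.cast_div_le
      _ = (N:ℝ) * ∑ d ∈ Finset.Icc 1 N, (d:ℝ)⁻¹ := by rw [Finset.mul_sum]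
      _ ≤ (N:ℝ) * (1 + Real.log N) := by
          refine mul_le_mul_of_nonneg_left (aux_harmonic N) (le_of_lt hN0)
      _ ≤ x * (3 * L) := by
          refine mul_le_mul hNx (by linarith) ?_ (le_of_lt hx0)
          have : (0:ℝ) ≤ Real.log N := Real.log_natCast_nonneg N
          linarith
  -- bound the psi sum
  have hlogM : Real.log M ≤ 6 * L := by
    have hM9 : (M:ℝ) = 9 * (N:ℝ)^2 := by push_cast [hMdef]; ring
    have hN2' : (2:ℝ) ≤ (N:ℝ) := by exact_mod_cast hN2
    have hMx : (M:ℝ) ≤ x ^ 6 := by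
      rw [hM9]
      have h9 : (9:ℝ) ≤ (N:ℝ)^4 := by nlinarith [hN2', sq_nonneg ((N:ℝ)^2 - 4)]
      calc 9 * (N:ℝ)^2 ≤ (N:ℝ)^4 * (N:ℝ)^2 := by nlinarith [sq_nonneg (N:ℝ)]
        _ = (N:ℝ)^6 := by ring
        _ ≤ x ^ 6 := pow_le_pow_left₀ (le_of_lt hN0) hNx 6
    have h1 : Real.log M ≤ Real.log (x ^ 6) :=
      Real.log_le_log (by exact_mod_cast hM1) hMx
    rw [Real.log_pow] at h1
    push_cast at h1
    linarith
  have hpsi : ((∑ m ∈ Finset.Icc 1 M, N / m.totient : ℕ) : ℝ) ≤ x * (64 * L ^ 2) := by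
    push_cast
    calc ∑ m ∈ Finset.Icc 1 M, ((N / m.totient : ℕ) : ℝ)
        ≤ ∑ m ∈ Finset.Icc 1 M, (N:ℝ) * ((m.divisors.card : ℝ) / m) := by
          refine Finset.sum_le_sum fun m hm => ?_
          have hm1 : 1 ≤ m := (Finset.mem_Icc.mp hm).1
          have hφ : 0 < m.totient := Nat.totient_pos.mpr hm1
          have hkey : m ≤ m.totient * m.divisors.card := aux_le_totient_mul m hm1
          have hφR : (0:ℝ) < (m.totient : ℝ) := by exact_mod_cast hφ
          have hmR : (0:ℝ) < (m : ℝ) := by exact_mod_cast hm1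
          refine le_trans Nat.cast_div_le ?_
          rw [← mul_div_assoc, div_le_div_iff₀ hφR hmR]
          have hc : (m:ℝ) ≤ (m.totient : ℝ) * (m.divisors.card : ℝ) := by exact_mod_cast hkey
          nlinarith [hN0, hc]
      _ = (N:ℝ) * ∑ m ∈ Finset.Icc 1 M, ((m.divisors.card : ℝ) / m) := by rw [Finset.mul_sum]
      _ ≤ (N:ℝ) * (∑ d ∈ Finset.Icc 1 M, (d:ℝ)⁻¹) ^ 2 := by
          exact mul_le_mul_of_nonneg_left (aux_sum_tau_div M) (le_of_lt hN0)
      _ ≤ x * (64 * L ^ 2) := by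
          have hH : ∑ d ∈ Finset.Icc 1 M, (d:ℝ)⁻¹ ≤ 8 * L := by
            have := aux_harmonic M
            linarith
          have hHnn : (0:ℝ) ≤ ∑ d ∈ Finset.Icc 1 M, (d:ℝ)⁻¹ := by positivity
          refine mul_le_mul hNx ?_ (by positivity) (le_of_lt hx0)
          nlinarith
  -- combine
  have htotal : (E.card : ℝ) * L ^ (A + 2 : ℝ) ≤ 70 * x * L ^ 2 := by
    refine le_trans hmarkov ?_
    have hsum : ∑ n ∈ Finset.Icc 1 N,
        ((((Finset.Icc 1 M).filter (fun m => m.totient ∣ n)).card : ℝ)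
          + (n.divisors.card : ℝ))
        = ((∑ m ∈ Finset.Icc 1 M, N / m.totient : ℕ) : ℝ)
          + ((∑ d ∈ Finset.Icc 1 N, N / d : ℕ) : ℝ) := by
      rw [← aux_sum_count_nat N M, ← aux_sum_tau_nat N]
      push_cast
      rw [Finset.sum_add_distrib]
    rw [hsum]
    have h3L : x * (3 * L) ≤ x * (6 * L ^ 2) := by nlinarith
    calc ((∑ m ∈ Finset.Icc 1 M, N / m.totient : ℕ) : ℝ)
          + ((∑ d ∈ Finset.Icc 1 N, N / d : ℕ) : ℝ)
        ≤ x * (64 * L ^ 2) + x * (3 * L) := add_le_add hpsi htau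
      _ ≤ x * (64 * L ^ 2) + x * (6 * L ^ 2) := by linarith
      _ = 70 * x * L ^ 2 := by ring
  have hLA : (0:ℝ) < L ^ (A : ℝ) := Real.rpow_pos_of_pos hL0 A
  have hrw : L ^ (A + 2 : ℝ) = L ^ (A:ℝ) * L ^ 2 := by
    rw [Real.rpow_add hL0]
    congr 1
    rw [show ((2:ℝ)) = ((2:ℕ):ℝ) by norm_num, Real.rpow_natCast]
  have hfin : (E.card : ℝ) * L ^ (A:ℝ) ≤ 70 * x := by
    have hL2pos : (0:ℝ) < L ^ 2 := by positivity
    refine le_of_mul_le_mul_right ?_ hL2pos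
    calc (E.card : ℝ) * L ^ (A:ℝ) * L ^ 2 = (E.card : ℝ) * L ^ (A + 2 : ℝ) := by
          rw [hrw]; ring
      _ ≤ 70 * x * L ^ 2 := htotal
  rw [le_div_iff₀ hLA]
  exact hfin
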